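/- The relation on nodes of a finite directed graph G defined by 'u ~ v if and only if the input trees T_u and T_v are isomorphic' is an equivalence relation, and the induced partition of N_G is balanced: for any two equivalence classes C and C' and any two nodes u, v ∈ C, the number of edges from nodes of C' into u equals the number of edges from nodes of C' into v. -/

import Mathlib

/-- A finite directed multigraph: a node type, an edge type, and source/target maps. -/
structure FinDigraph where
  V : Type
  E : Type
  [finV : Finite V]
  [finE : Finite E]
  src : E → V
  tgt : E → V

attribute [instance] FinDigraph.finV FinDigraph.finE

namespace FinDigraph

/-- The far endpoint of a (reversed) path ending at `u`: the list `[e_k, …, e_1]`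
represents the directed path `src e_k → ⋯ → tgt e_1 = u`. -/
def farEnd (G : FinDigraph) (u : G.V) : List G.E → G.V
  | [] => u
  | e :: _ => G.src e

/-- `l = [e_k, …, e_1]` is a directed path of `G` ending at `u`. -/
def IsInPath (G : FinDigraph) (u : G.V) : List G.E → Prop
  | [] => True
  | e :: es => IsInPath G u es ∧ G.tgt e = G.farEnd u es

/-- The nodes of the input tree of `u`: all directed paths ending at `u`. -/
def InPath (G : FinDigraph) (u : G.V) : Type := {l : List G.E // G.IsInPath u l}

/-- The root of the input tree of `u` (the empty path). -/
def root (G : FinDigraph) (u : G.V) : G.InPath u := ⟨[], trivial⟩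

/-- The parent of a path in the input tree (drop the farthest edge); the root is its own parent. -/
def parent (G : FinDigraph) (u : G.V) : G.InPath u → G.InPath u
  | ⟨[], h⟩ => ⟨[], h⟩
  | ⟨_ :: es, h⟩ => ⟨es, h.1⟩

/-- Isomorphism of input trees: a bijection of paths preserving root, depth and parent. -/
def InTreeIso (G : FinDigraph) (u : G.V) (H : FinDigraph) (v : H.V) : Prop :=
  ∃ F : G.InPath u ≃ H.InPath v,
    F (G.root u) = H.root v ∧
    (∀ p, ((F p).1).length = (p.1).length) ∧
    (∀ p, F (G.parent u p) = H.parent v (F p))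

/-- The reverse graph (all edges flipped). -/
def rev (G : FinDigraph) : FinDigraph :=
  { V := G.V, E := G.E, src := G.tgt, tgt := G.src }

/-- Isomorphism of output trees = isomorphism of input trees in the reverse graphs. -/
def OutTreeIso (G : FinDigraph) (u : G.V) (H : FinDigraph) (v : H.V) : Prop :=
  InTreeIso (rev G) u (rev H) v

/-- A homomorphism of directed multigraphs. -/
structure Hom (G H : FinDigraph) where
  onV : G.V → H.V
  onE : G.E → H.E
  map_src : ∀ e, H.src (onE e) = onV (G.src e)
  map_tgt : ∀ e, H.tgt (onE e) = onV (G.tgt e)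

/-- Isomorphism of directed multigraphs. -/
def IsIso (G H : FinDigraph) : Prop :=
  ∃ φ : Hom G H, Function.Bijective φ.onV ∧ Function.Bijective φ.onE

/-- Fibration equivalence of nodes: isomorphic input trees. -/
def fibEquiv (G : FinDigraph) (u v : G.V) : Prop := InTreeIso G u G v

/-- Covering equivalence of nodes: isomorphic input trees and isomorphic output trees. -/
def covEquiv (G : FinDigraph) (u v : G.V) : Prop :=
  InTreeIso G u G v ∧ OutTreeIso G u G v

/-- Orbit equivalence: some automorphism maps one node to the other. -/
def orbitEquiv (G : FinDigraph) (u v : G.V) : Prop :=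
  ∃ φ : Hom G G, Function.Bijective φ.onV ∧ Function.Bijective φ.onE ∧ φ.onV u = v

theorem inTreeIso_refl (G : FinDigraph) (u : G.V) : InTreeIso G u G u :=
  ⟨Equiv.refl _, rfl, fun _ => rfl, fun _ => rfl⟩

theorem inTreeIso_symm {G : FinDigraph} {u : G.V} {H : FinDigraph} {v : H.V}
    (h : InTreeIso G u H v) : InTreeIso H v G u := by
  obtain ⟨F, hroot, hlen, hpar⟩ := h
  refine ⟨F.symm, ?_, ?_, ?_⟩
  · rw [← hroot, Equiv.symm_apply_apply]
  · intro p; rw [← hlen (F.symm p), Equiv.apply_symm_apply]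
  · intro p
    apply F.injective
    rw [Equiv.apply_symm_apply, hpar (F.symm p), Equiv.apply_symm_apply]

theorem inTreeIso_trans {G : FinDigraph} {u : G.V} {H : FinDigraph} {v : H.V}
    {K : FinDigraph} {w : K.V}
    (h₁ : InTreeIso G u H v) (h₂ : InTreeIso H v K w) : InTreeIso G u K w := by
  obtain ⟨F, fr, fl, fp⟩ := h₁
  obtain ⟨F', gr, gl, gp⟩ := h₂
  refine ⟨F.trans F', ?_, ?_, ?_⟩
  · simp [Equiv.trans_apply, fr, gr]
  · intro p; simp [Equiv.trans_apply, gl, fl]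
  · intro p; simp [Equiv.trans_apply, fp, gp]

/-- The setoid of fibration equivalence (isomorphism of input trees). -/
def fibSetoid (G : FinDigraph) : Setoid G.V :=
  ⟨fibEquiv G, ⟨fun u => inTreeIso_refl G u, inTreeIso_symm, inTreeIso_trans⟩⟩

/-- The minimal fibration base of `G`: nodes are the fibers (input-tree isomorphism
classes), and the edges from a fiber `C'` into a fiber `C` are the edges of `G` from
nodes of `C'` into the chosen representative of `C`. -/
def base (G : FinDigraph) : FinDigraph where
  V := Quotient (fibSetoid G)
  E := {e : G.E // G.tgt e = (Quotient.mk (fibSetoid G) (G.tgt e)).out}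
  src e := Quotient.mk (fibSetoid G) (G.src e.1)
  tgt e := Quotient.mk (fibSetoid G) (G.tgt e.1)

/-- The fiber of a node, as a node of the minimal base. -/
def fibClass (G : FinDigraph) (u : G.V) : (base G).V := Quotient.mk (fibSetoid G) u

/-- A partition (given as an equivalence relation) is balanced if any two equivalent
nodes receive the same number of edges from each class. -/
def IsBalanced (G : FinDigraph) (r : G.V → G.V → Prop) : Prop :=
  Equivalence r ∧ ∀ u v, r u v → ∀ w : G.V,
    Nat.card {e : G.E // G.tgt e = u ∧ r (G.src e) w} =
    Nat.card {e : G.E // G.tgt e = v ∧ r (G.src e) w}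

/-- The multiset of states of the in-neighbors of `u` (with edge multiplicity). -/
noncomputable def inStates (G : FinDigraph) {S : Type} (x : G.V → S) (u : G.V) :
    Multiset S :=
  letI := Fintype.ofFinite G.E
  letI := Classical.decEq G.V
  (Finset.univ.filter (fun e => G.tgt e = u)).val.map fun e => x (G.src e)

end FinDigraph

namespace FinDigraph

lemma farEnd_append (G : FinDigraph) (u : G.V) (l p : List G.E) :
    G.farEnd u (l ++ p) = G.farEnd (G.farEnd u p) l := by
  cases l <;> rfl

lemma isInPath_append (G : FinDigraph) (u : G.V) (p : List G.E) (hp : G.IsInPath u p)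
    (l : List G.E) :
    G.IsInPath u (l ++ p) ↔ G.IsInPath (G.farEnd u p) l := by
  induction l with
  | nil => simpa [IsInPath] using hp
  | cons x t ih => simp [IsInPath, ih, farEnd_append]

lemma parent_val (G : FinDigraph) (u : G.V) (q : G.InPath u) :
    (G.parent u q).1 = q.1.drop 1 := by
  obtain ⟨l, h⟩ := q
  cases l <;> rfl

lemma parent_iterate_val (G : FinDigraph) (u : G.V) (k : ℕ) (q : G.InPath u) :
    ((G.parent u)^[k] q).1 = q.1.drop k := by
  induction k generalizing q with
  | zero => rfl
  | succ n ih =>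
    rw [Function.iterate_succ_apply, ih, parent_val, List.drop_drop, Nat.add_comm]

lemma iso_iterate {G : FinDigraph} {u : G.V} {H : FinDigraph} {v : H.V}
    (F : G.InPath u ≃ H.InPath v)
    (hpar : ∀ p, F (G.parent u p) = H.parent v (F p)) (k : ℕ) (q : G.InPath u) :
    F ((G.parent u)^[k] q) = (H.parent v)^[k] (F q) := by
  induction k generalizing q with
  | zero => rfl
  | succ n ih =>
    rw [Function.iterate_succ_apply, ih, hpar, Function.iterate_succ_apply]

lemma iso_suffix {G : FinDigraph} {u : G.V} {H : FinDigraph} {v : H.V}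
    (F : G.InPath u ≃ H.InPath v)
    (hpar : ∀ p, F (G.parent u p) = H.parent v (F p))
    (p q : G.InPath u) (h : p.1 <:+ q.1) : (F p).1 <:+ (F q).1 := by
  obtain ⟨t, ht⟩ := h
  have hpq : (G.parent u)^[t.length] q = p := by
    apply Subtype.ext
    rw [parent_iterate_val, ← ht, List.drop_left]
  have hd : (H.parent v)^[t.length] (F q) = F p := by
    rw [← iso_iterate F hpar, hpq]
  have : (F q).1.drop t.length = (F p).1 := by
    rw [← hd, parent_iterate_val]
  rw [← this]
  exact List.drop_suffix _ _

/-- The subtree of the input tree above a path `p` is the input tree of the far end. -/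
lemma inTreeIso_farEnd {G : FinDigraph} {u : G.V} {H : FinDigraph} {v : H.V}
    (F : G.InPath u ≃ H.InPath v)
    (hlen : ∀ p, ((F p).1).length = (p.1).length)
    (hpar : ∀ p, F (G.parent u p) = H.parent v (F p))
    (p : G.InPath u) :
    InTreeIso G (G.farEnd u p.1) H (H.farEnd v (F p).1) := by
  classical
  -- symmetric properties
  have hlen' : ∀ q, ((F.symm q).1).length = (q.1).length := by
    intro q; rw [← hlen (F.symm q), F.apply_symm_apply]
  have hpar' : ∀ q, F.symm (H.parent v q) = G.parent u (F.symm q) := by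
    intro q
    apply F.injective
    rw [F.apply_symm_apply, hpar (F.symm q), F.apply_symm_apply]
  set p' := F p with hp'
  -- the extension of a path `l` of the subtree, as a path of the whole tree
  have mk : ∀ (l : G.InPath (G.farEnd u p.1)), G.IsInPath u (l.1 ++ p.1) :=
    fun l => (isInPath_append G u p.1 p.2 l.1).mpr l.2
  have mk' : ∀ (t : H.InPath (H.farEnd v p'.1)), H.IsInPath v (t.1 ++ p'.1) :=
    fun t => (isInPath_append H v p'.1 p'.2 t.1).mpr t.2
  -- the forward map: strip p' from F (l ++ p)
  have key : ∀ (l : G.InPath (G.farEnd u p.1)),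
      ∃ t : H.InPath (H.farEnd v p'.1), t.1 ++ p'.1 = (F ⟨l.1 ++ p.1, mk l⟩).1 := by
    intro l
    have hsuf : p'.1 <:+ (F ⟨l.1 ++ p.1, mk l⟩).1 :=
      iso_suffix F hpar p _ (List.suffix_append l.1 p.1)
    obtain ⟨t, ht⟩ := hsuf
    have htin : H.IsInPath (H.farEnd v p'.1) t := by
      have := (F ⟨l.1 ++ p.1, mk l⟩).2
      rw [← ht] at this
      exact (isInPath_append H v p'.1 p'.2 t).mp this
    exact ⟨⟨t, htin⟩, ht⟩
  choose f hf using key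
  -- the backward map
  have key' : ∀ (t : H.InPath (H.farEnd v p'.1)),
      ∃ l : G.InPath (G.farEnd u p.1), l.1 ++ p.1 = (F.symm ⟨t.1 ++ p'.1, mk' t⟩).1 := by
    intro t
    have hps : F.symm p' = p := F.symm_apply_apply p
    have hsuf : p.1 <:+ (F.symm ⟨t.1 ++ p'.1, mk' t⟩).1 := by
      have := iso_suffix F.symm hpar' p' ⟨t.1 ++ p'.1, mk' t⟩ (List.suffix_append t.1 p'.1)
      rwa [hps] at this
    obtain ⟨l, hl⟩ := hsuf
    have hlin : G.IsInPath (G.farEnd u p.1) l := by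
      have := (F.symm ⟨t.1 ++ p'.1, mk' t⟩).2
      rw [← hl] at this
      exact (isInPath_append G u p.1 p.2 l).mp this
    exact ⟨⟨l, hlin⟩, hl⟩
  choose g hg using key'
  have left : ∀ l, g (f l) = l := by
    intro l
    have h1 : (f l).1 ++ p'.1 = (F ⟨l.1 ++ p.1, mk l⟩).1 := hf l
    have h2 : (⟨(f l).1 ++ p'.1, mk' (f l)⟩ : H.InPath v) = F ⟨l.1 ++ p.1, mk l⟩ :=
      Subtype.ext h1
    have h3 : (g (f l)).1 ++ p.1 = (F.symm (F ⟨l.1 ++ p.1, mk l⟩)).1 := by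
      rw [← h2]; exact hg (f l)
    erw [F.symm_apply_apply] at h3
    exact Subtype.ext (List.append_cancel_right h3)
  have right : ∀ t, f (g t) = t := by
    intro t
    have h2 : (⟨(g t).1 ++ p.1, mk (g t)⟩ : G.InPath u) = F.symm ⟨t.1 ++ p'.1, mk' t⟩ :=
      Subtype.ext (hg t)
    have h3 : (f (g t)).1 ++ p'.1 = (F (F.symm ⟨t.1 ++ p'.1, mk' t⟩)).1 := by
      rw [← h2]; exact hf (g t)
    erw [F.apply_symm_apply] at h3
    exact Subtype.ext (List.append_cancel_right h3)
  refine ⟨⟨f, g, left, right⟩, ?_, ?_, ?_⟩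
  · -- root
    show f (G.root _) = H.root _
    have h1 : (f (G.root _)).1 ++ p'.1 = (F ⟨[] ++ p.1, mk (G.root _)⟩).1 := hf _
    have h2 : (⟨[] ++ p.1, mk (G.root _)⟩ : G.InPath u) = p := Subtype.ext (by simp)
    rw [h2, ← hp'] at h1
    apply Subtype.ext
    exact List.append_cancel_right (bs := p'.1) (by simpa [FinDigraph.root] using h1)
  · -- length
    intro l
    show ((f l).1).length = (l.1).length
    have h1 := congrArg List.length (hf l)
    erw [hlen] at h1
    simp only [List.length_append] at h1
    have hp'len : (p'.1).length = (p.1).length := hlen p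
    omega
  · -- parent
    rintro ⟨l, hl⟩
    cases l with
    | nil =>
      show f _ = H.parent _ (f _)
      have hroot : (⟨[], hl⟩ : G.InPath (G.farEnd u p.1)) = G.root _ := rfl
      have hfr : f (G.root _) = H.root _ := by
        have h1 : (f (G.root _)).1 ++ p'.1 = (F ⟨[] ++ p.1, mk (G.root _)⟩).1 := hf _
        have h2 : (⟨[] ++ p.1, mk (G.root _)⟩ : G.InPath u) = p := Subtype.ext (by simp)
        rw [h2, ← hp'] at h1
        apply Subtype.ext
        exact List.append_cancel_right (bs := p'.1) (by simpa [FinDigraph.root] using h1)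
      show f (G.parent _ ⟨[], hl⟩) = H.parent _ (f ⟨[], hl⟩)
      have hpid : G.parent _ (⟨[], hl⟩ : G.InPath (G.farEnd u p.1)) = ⟨[], hl⟩ := rfl
      rw [hpid, hroot, hfr]
      rfl
    | cons x xs =>
      show f (G.parent _ ⟨x :: xs, hl⟩) = H.parent _ (f ⟨x :: xs, hl⟩)
      have hparl : G.parent _ (⟨x :: xs, hl⟩ : G.InPath (G.farEnd u p.1)) = ⟨xs, hl.1⟩ := rfl
      rw [hparl]
      -- the big-tree paths
      have hbig : G.parent u ⟨(x :: xs) ++ p.1, mk ⟨x :: xs, hl⟩⟩ = ⟨xs ++ p.1, mk ⟨xs, hl.1⟩⟩ := by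
        apply Subtype.ext
        erw [parent_val]
      have h1 : (f ⟨xs, hl.1⟩).1 ++ p'.1 = (F ⟨xs ++ p.1, mk ⟨xs, hl.1⟩⟩).1 := hf _
      have h2 : (f ⟨x :: xs, hl⟩).1 ++ p'.1 = (F ⟨(x :: xs) ++ p.1, mk ⟨x :: xs, hl⟩⟩).1 := hf _
      have h3 : (F ⟨xs ++ p.1, mk ⟨xs, hl.1⟩⟩).1
          = ((F ⟨(x :: xs) ++ p.1, mk ⟨x :: xs, hl⟩⟩).1).drop 1 := by
        erw [← hbig, hpar, parent_val]
      -- length of f (x::xs) part is xs.length + 1 ≥ 1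
      have hflen : ((f ⟨x :: xs, hl⟩).1).length = xs.length + 1 := by
        have h4 := congrArg List.length h2
        erw [hlen] at h4
        simp only [List.length_append, List.length_cons] at h4
        have hp'len : (p'.1).length = (p.1).length := hlen p
        omega
      apply Subtype.ext
      rw [parent_val]
      apply List.append_cancel_right (bs := p'.1)
      rw [h1, h3, ← h2, List.drop_append]
      have : 1 - ((f ⟨x :: xs, hl⟩).1).length = 0 := by omega
      rw [this, List.drop_zero]

end FinDigraph

namespace FinDigraph

lemma card_le_of_fibEquiv {G : FinDigraph} {u v : G.V} (h : fibEquiv G u v) (w : G.V) :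
    Nat.card {e : G.E // G.tgt e = u ∧ fibEquiv G (G.src e) w} ≤
    Nat.card {e : G.E // G.tgt e = v ∧ fibEquiv G (G.src e) w} := by
  classical
  obtain ⟨F, hroot, hlen, hpar⟩ := h
  have key : ∀ x : {e : G.E // G.tgt e = u ∧ fibEquiv G (G.src e) w},
      ∃ e' : G.E, (G.tgt e' = v ∧ fibEquiv G (G.src e') w) ∧
        (F ⟨[x.1], ⟨trivial, x.2.1⟩⟩).1 = [e'] := by
    rintro ⟨e, he, hew⟩
    set p : G.InPath u := ⟨[e], ⟨trivial, he⟩⟩ with hp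
    have hl1 : ((F p).1).length = 1 := by rw [hlen]; rfl
    obtain ⟨e', he'⟩ := List.length_eq_one_iff.mp hl1
    have htgt : G.tgt e' = v := by
      have := (F p).2
      rw [he'] at this
      exact this.2
    have hsub : InTreeIso G (G.farEnd u p.1) G (G.farEnd v (F p).1) :=
      inTreeIso_farEnd F hlen hpar p
    rw [he'] at hsub
    have hsrc : fibEquiv G (G.src e') w := inTreeIso_trans (inTreeIso_symm hsub) hew
    exact ⟨e', ⟨htgt, hsrc⟩, he'⟩
  choose f hf1 hf2 using key
  have hinj : Function.Injective (fun x => (⟨f x, hf1 x⟩ :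
      {e : G.E // G.tgt e = v ∧ fibEquiv G (G.src e) w})) := by
    rintro ⟨e₁, h₁⟩ ⟨e₂, h₂⟩ hfe
    have hval : f ⟨e₁, h₁⟩ = f ⟨e₂, h₂⟩ := congrArg Subtype.val hfe
    have hFeq : F ⟨[e₁], ⟨trivial, h₁.1⟩⟩ = F ⟨[e₂], ⟨trivial, h₂.1⟩⟩ := by
      apply Subtype.ext
      rw [hf2 ⟨e₁, h₁⟩, hf2 ⟨e₂, h₂⟩, hval]
    have := F.injective hFeq
    have hlist : [e₁] = [e₂] := congrArg Subtype.val this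
    exact Subtype.ext (List.head_eq_of_cons_eq hlist)
  exact Nat.card_le_card_of_injective _ hinj

end FinDigraph



/-- input-tree isomorphism is an equivalence relation on the nodes of a
finite directed graph, and the induced partition is balanced. -/
theorem fibEquiv_equivalence_and_balanced (G : FinDigraph) :
    Equivalence (FinDigraph.fibEquiv G) ∧
    FinDigraph.IsBalanced G (FinDigraph.fibEquiv G) := by
  refine ⟨(FinDigraph.fibSetoid G).iseqv, (FinDigraph.fibSetoid G).iseqv, ?_⟩
  intro u v h w
  exact le_antisymm (FinDigraph.card_le_of_fibEquiv h w)
    (FinDigraph.card_le_of_fibEquiv (FinDigraph.inTreeIso_symm h) w)
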